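/- Let M ⊆ X be a complex submanifold of U contained in the analytic space X, and let A be a bounded constructible complex of sheaves on X. Then A is φ-constructible along M if and only if SS_M(A) ⊆ T*_M U, where SS_M(A) denotes the part of the micro-support of A lying over M. -/

import Mathlib

open Set Topology

noncomputable section

/-- The ambient space `ℂ^{n+1}`. -/
abbrev Amb (n : ℕ) := Fin (n + 1) → ℂ

/-- Covectors: continuous linear forms on `ℂ^{n+1}` (cotangent fiber). -/
abbrev Cov (n : ℕ) := (Fin (n + 1) → ℂ) →L[ℂ] ℂ

/-- `A` is a (closed) complex analytic subset of the open set `U`: locally on `U`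
it is the common zero set of a family of holomorphic functions. -/
def IsAnalyticSubsetOf {n : ℕ} (U A : Set (Amb n)) : Prop :=
  A ⊆ U ∧ ∀ x ∈ U, ∃ V : Set (Amb n), IsOpen V ∧ x ∈ V ∧ V ⊆ U ∧
    ∃ (ι : Type) (f : ι → Amb n → ℂ),
      (∀ i, AnalyticOnNhd ℂ (f i) V) ∧ A ∩ V = {y ∈ V | ∀ i, f i y = 0}

/-- `M` is a `d`-dimensional complex submanifold of the open set `U`:
locally it is the zero set of a holomorphic submersion to `ℂ^{n+1-d}`. -/
def IsSubmanifoldDim {n : ℕ} (U M : Set (Amb n)) (d : ℕ) : Prop :=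
  M ⊆ U ∧ ∀ x ∈ M, ∃ V : Set (Amb n), IsOpen V ∧ x ∈ V ∧ V ⊆ U ∧
    ∃ g : Amb n → (Fin (n + 1 - d) → ℂ),
      AnalyticOnNhd ℂ g V ∧ (∀ y ∈ V, Function.Surjective (fderiv ℂ g y)) ∧
      M ∩ V = {y ∈ V | g y = 0}

/-- The conormal space `T^*_M 𝒰 ⊆ T^*𝒰 = 𝒰 × (ℂ^{n+1})^*`. -/
def conormal {n : ℕ} (M : Set (Amb n)) : Set (Amb n × Cov n) :=
  {p | p.1 ∈ M ∧ ∀ v ∈ tangentConeAt ℂ M p.1, p.2 v = 0}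

/-- The relative conormal space `T^*_{f|_M} 𝒰`. -/
def relConormal {n : ℕ} (f : Amb n → ℂ) (M : Set (Amb n)) : Set (Amb n × Cov n) :=
  {p | p.1 ∈ M ∧ ∀ v ∈ tangentConeAt ℂ M p.1, fderiv ℂ f p.1 v = 0 → p.2 v = 0}

/-- Whitney's condition (a) for the pair `(W, M)` (at every point of `M`),
in conormal terms: the fiber of `closure (T^*_W 𝒰)` over any `x ∈ M` is
contained in the fiber of `T^*_M 𝒰`. -/
def WhitneyA {n : ℕ} (W M : Set (Amb n)) : Prop :=
  ∀ x ∈ M, ∀ η : Cov n, (x, η) ∈ closure (conormal W) →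
    ∀ v ∈ tangentConeAt ℂ M x, η v = 0

/-- Thom's `a_f` condition for the pair `(W, M)` (at every point of `M`),
in conormal terms. -/
def AfCond {n : ℕ} (f : Amb n → ℂ) (W M : Set (Amb n)) : Prop :=
  ∀ x ∈ M, ∀ η : Cov n, (x, η) ∈ closure (relConormal f W) →
    ∀ v ∈ tangentConeAt ℂ M x, fderiv ℂ f x v = 0 → η v = 0

/-- A complex analytic partition of `X ⊆ U` into connected analytic submanifolds,
with analytic closures and frontiers. -/
structure AnalyticPartition {n : ℕ} (U X : Set (Amb n)) : Type 1 where
  strata : Set (Set (Amb n))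
  locFin : LocallyFinite (fun W : strata => (W : Set (Amb n)))
  pairwiseDisj : strata.PairwiseDisjoint id
  covers : ⋃₀ strata = X
  submanifold : ∀ W ∈ strata, ∃ d, IsSubmanifoldDim U W d
  conn : ∀ W ∈ strata, IsConnected W
  closure_analytic : ∀ W ∈ strata, IsAnalyticSubsetOf U (closure W ∩ U)
  frontier_analytic : ∀ W ∈ strata, IsAnalyticSubsetOf U ((closure W \ W) ∩ U)

/-- `A` (represented by its family of vanishing-cycle supports `suppPhi g = supp φ_g[-1]A`)
is φ-constructible along `M`: for every point `x ∈ M` and every analytic germ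
`g : (X,x) → (ℂ,0)` with `x` a regular point of `g|_M`, `x ∉ supp φ_g[-1]A`. -/
def PhiConstrAlong {n : ℕ} (suppPhi : (Amb n → ℂ) → Set (Amb n)) (M : Set (Amb n)) : Prop :=
  ∀ x ∈ M, ∀ g : Amb n → ℂ, AnalyticAt ℂ g x → g x = 0 →
    (∃ v ∈ tangentConeAt ℂ M x, fderiv ℂ g x v ≠ 0) → x ∉ suppPhi g

/-- The fundamental compatibility (Theorem 2.10 of the paper):
`x ∈ supp φ_g[-1]A` if and only if `(x, d_x g) ∈ SS(A)`. -/
def SuppSSCompat {n : ℕ} (suppPhi : (Amb n → ℂ) → Set (Amb n))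
    (SS : Set (Amb n × Cov n)) : Prop :=
  ∀ (g : Amb n → ℂ) (x : Amb n), AnalyticAt ℂ g x → g x = 0 →
    (x ∈ suppPhi g ↔ (x, fderiv ℂ g x) ∈ SS)

/-- Zero locus of a set of polynomials. -/
def mvZeros {n : ℕ} (S : Set (MvPolynomial (Fin (n + 1)) ℂ)) : Set (Amb n) :=
  {x | ∀ p ∈ S, MvPolynomial.eval x p = 0}

/-- `C` is the affine cone defined by a family of homogeneous polynomials. -/
def IsAlgCone {n : ℕ} (C : Set (Amb n)) : Prop :=
  ∃ S : Set (MvPolynomial (Fin (n + 1)) ℂ),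
    (∀ p ∈ S, ∃ d, MvPolynomial.IsHomogeneous p d) ∧ C = mvZeros S

/-- The dimension of the affine cone `C`, as the Krull dimension of its coordinate ring.
(The dimension of the associated projective set is this minus one.) -/
def coneDim {n : ℕ} (C : Set (Amb n)) : WithBot ℕ∞ :=
  ringKrullDim (MvPolynomial (Fin (n + 1)) ℂ ⧸ MvPolynomial.vanishingIdeal ℂ C)

/-- The affine cone over a subset of projective space. -/
def projCone {n : ℕ} (V : Set (Projectivization ℂ (Amb n))) : Set (Amb n) :=
  insert 0 {x | ∃ h : x ≠ 0, Projectivization.mk ℂ x h ∈ V}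

/-- Coordinates on the dual space. -/
def dualCoords {n : ℕ} (η : Cov n) : Amb n := fun i => η (Pi.single i (1 : ℂ))

/-- The affine cone over a subset of the projectivized cotangent fiber `ℙ((T^*𝒰)_p)`. -/
def dualProjCone {n : ℕ} (V : Set (Projectivization ℂ (Cov n))) : Set (Amb n) :=
  dualCoords '' (insert 0 {η : Cov n | ∃ h : η ≠ 0, Projectivization.mk ℂ η h ∈ V})

/-- `V ⊆ ℙ((T^*𝒰)_p)` is a projective algebraic subset of dimension `d`. -/
def IsDualProjAlgOfDim {n : ℕ} (V : Set (Projectivization ℂ (Cov n))) (d : ℕ) : Prop :=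
  IsAlgCone (dualProjCone V) ∧ coneDim (dualProjCone V) = ((d + 1 : ℕ) : WithBot ℕ∞)

/-- `A` is weakly φ-constructible with respect to the partition with the given strata:
at each point `p` of a positive-dimensional stratum `W` there is a projective algebraic
set `V_p ⊆ ℙ((T^*𝒰)_p)` of dimension `dim W - 1` of covectors `𝔩` with
`p ∉ supp φ_{𝔩 - 𝔩(p)}[-1]A`. -/
def WeaklyPhiConstr {n : ℕ} (suppPhi : (Amb n → ℂ) → Set (Amb n))
    (strata : Set (Set (Amb n))) (dim : Set (Amb n) → ℕ) : Prop :=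
  ∀ W ∈ strata, 0 < dim W → ∀ p ∈ W,
    ∃ V : Set (Projectivization ℂ (Cov n)),
      IsDualProjAlgOfDim V (dim W - 1) ∧
      ∀ (l : Cov n) (h : l ≠ 0), Projectivization.mk ℂ l h ∈ V →
        p ∉ suppPhi (fun y => l y - l p)

/-- Proposition 3.1: `A` is φ-constructible along `M` iff
`SS_M(A) ⊆ T^*_M 𝒰`.  The complex `A` is represented abstractly by its micro-support
`SS` and its vanishing-cycle supports `suppPhi`, linked by the fundamental fact
(Theorem 2.10 of the paper) that `x ∈ supp φ_g[-1]A ↔ (x, d_x g̃) ∈ SS(A)`. -/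
theorem stmt3 {n : ℕ} (U X M : Set (Amb n)) (hU : IsOpen U)
    (hX : IsAnalyticSubsetOf U X) (hM : ∃ d, IsSubmanifoldDim U M d) (hMX : M ⊆ X)
    (SS : Set (Amb n × Cov n)) (suppPhi : (Amb n → ℂ) → Set (Amb n))
    (hcompat : SuppSSCompat suppPhi SS) :
    PhiConstrAlong suppPhi M ↔ ∀ p ∈ SS, p.1 ∈ M → p ∈ conormal M := by
  constructor
  · rintro h ⟨x, η⟩ hSS hxM
    refine ⟨hxM, fun v hv => ?_⟩
    by_contra hne
    have hg : AnalyticAt ℂ (fun y => η y - η x) x :=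
      (η.analyticAt x).sub analyticAt_const
    have hg0 : (fun y => η y - η x) x = 0 := sub_self _
    have hderiv : fderiv ℂ (fun y => η y - η x) x = η := by
      have : fderiv ℂ (fun y => η y - η x) x = fderiv ℂ η x - fderiv ℂ (fun _ => η x) x :=
        fderiv_sub (η.differentiableAt) (differentiableAt_const _)
      simp [this, η.fderiv]
    have hnot := h x hxM (fun y => η y - η x) hg hg0 ⟨v, hv, by rw [hderiv]; exact hne⟩
    exact hnot ((hcompat _ x hg hg0).2 (by rwa [hderiv]))
  · rintro h x hxM g hg hg0 ⟨v, hv, hne⟩ hsupp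
    have hSS : (x, fderiv ℂ g x) ∈ SS := (hcompat g x hg hg0).1 hsupp
    exact hne ((h _ hSS hxM).2 v hv)

end
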